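/- Let A ∈ ℝ^{m×n}, let Θ ∈ ℝ^{n×n} be a diagonal matrix with strictly positive diagonal entries, let M = [[−Θ^{-1}, Aᵀ],[A, 0]] and E = [[0, 0],[0, δ I_m]] with δ > 0 (so ‖E‖ = δ). Fix an index i and let λᵢ be the i-th smallest eigenvalue of M; assume |λᵢ| > 2δ. For any t ∈ [0,1], let λᵢ(t) denote the i-th smallest eigenvalue of M + tE and let x(t) = (x₁(t), x₂(t)) be any unit eigenvector of M + tE associated with λᵢ(t). Then ‖x₂(t)‖ ≤ ‖A‖ / √((|λᵢ| − 2δ)² + ‖A‖²). -/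

import Mathlib

open Matrix

/-- Euclidean norm of a real vector. -/
noncomputable def euclidNorm {ι : Type*} [Fintype ι] (x : ι → ℝ) : ℝ :=
  Real.sqrt (∑ i, (x i) ^ 2)

/-- Spectral norm (largest singular value) of a real matrix. -/
noncomputable def specNorm {m n : ℕ} (A : Matrix (Fin m) (Fin n) ℝ) : ℝ :=
  Real.sqrt (⨆ i, (Matrix.isHermitian_mul_conjTranspose_self A).eigenvalues i)

/-- Sorted (nondecreasing) list of eigenvalues of a Hermitian matrix, with multiplicity. -/
noncomputable def sortedEigs {ι : Type*} [Fintype ι] [DecidableEq ι]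
    {M : Matrix ι ι ℝ} (hM : M.IsHermitian) : List ℝ :=
  (Finset.univ.val.map hM.eigenvalues).sort (· ≤ ·)

/-- The i-th smallest eigenvalue (counted with multiplicity). -/
noncomputable def ithEig {ι : Type*} [Fintype ι] [DecidableEq ι]
    {M : Matrix ι ι ℝ} (hM : M.IsHermitian) (i : ℕ)
    (hi : i < Fintype.card ι) : ℝ :=
  (sortedEigs hM).get ⟨i, by simpa [sortedEigs] using hi⟩

lemma exists_sorted_enum {ι : Type*} [Fintype ι] [DecidableEq ι]
    {M : Matrix ι ι ℝ} (hM : M.IsHermitian) :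
    ∃ g : Fin (Fintype.card ι) ≃ ι,
      Monotone (hM.eigenvalues ∘ g) ∧
      ∀ k : Fin (Fintype.card ι), ithEig hM k.1 k.2 = hM.eigenvalues (g k) := by
  classical
  set N := Fintype.card ι
  let e : Fin N ≃ ι := (Fintype.equivFin ι).symm
  let f : Fin N → ℝ := hM.eigenvalues ∘ e
  let σ : Equiv.Perm (Fin N) := Tuple.sort f
  refine ⟨σ.trans e, Tuple.monotone_sort f, ?_⟩
  have hlist : sortedEigs hM = List.ofFn (f ∘ σ) := by
    have hanti : IsAntisymm ℝ (· ≤ ·) := ⟨fun _ _ => le_antisymm⟩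
    refine (fun hp h1 h2 => List.Perm.eq_of_pairwise' (r := (· ≤ ·)) h1 h2 hp) ?_ ?_ ?_
    · unfold sortedEigs
      rw [← Multiset.coe_eq_coe, Multiset.sort_eq, List.ofFn_eq_map, ← Multiset.map_coe]
      have h1 : ((List.finRange N : List (Fin N)) : Multiset (Fin N)) = (Finset.univ : Finset (Fin N)).val := by
        rw [Fin.univ_def]
      rw [h1]
      have h2 : Multiset.map (f ∘ σ) Finset.univ.val
          = Multiset.map f (Multiset.map σ Finset.univ.val) := by
        rw [Multiset.map_map]
      have h3 : Multiset.map (⇑σ) (Finset.univ : Finset (Fin N)).val = Finset.univ.val := by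
        have := congrArg Finset.val (Finset.map_univ_equiv σ)
        simpa [Finset.map_val] using this
      have h4 : Multiset.map (⇑e) (Finset.univ : Finset (Fin N)).val = (Finset.univ : Finset ι).val := by
        have := congrArg Finset.val (Finset.map_univ_equiv e)
        simpa [Finset.map_val] using this
      have h5 : Multiset.map f (Finset.univ : Finset (Fin N)).val
          = Multiset.map hM.eigenvalues (Finset.univ : Finset ι).val := by
        show Multiset.map (hM.eigenvalues ∘ ⇑e) _ = _
        rw [← Multiset.map_map, h4]
      rw [h2, h3, h5]
    · exact Multiset.pairwise_sort _ _
    · exact (List.sortedLE_ofFn_iff.mpr (Tuple.monotone_sort f)).pairwise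
  intro k
  show (sortedEigs hM).get _ = _
  rw [List.get_of_eq hlist, List.get_ofFn]
  rfl

open scoped RealInnerProductSpace

lemma dot_eq_inner {ι : Type*} [Fintype ι] (u v : EuclideanSpace ℝ ι) :
    (inner ℝ u v : ℝ) = (u : ι → ℝ) ⬝ᵥ (v : ι → ℝ) := by
  rw [PiLp.inner_apply]
  simp [dotProduct, mul_comm]

lemma dot_sum {ι κ : Type*} [Fintype ι] (s : Finset κ) (x : ι → ℝ) (f : κ → ι → ℝ) :
    x ⬝ᵥ (∑ k ∈ s, f k) = ∑ k ∈ s, x ⬝ᵥ (f k) := by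
  simp only [dotProduct, Finset.sum_apply, Finset.mul_sum]
  exact Finset.sum_comm

lemma quad_eq_sum {ι : Type*} [Fintype ι] [DecidableEq ι] {N : ℕ}
    (Am : Matrix ι ι ℝ) (w : OrthonormalBasis (Fin N) ℝ (EuclideanSpace ℝ ι))
    (μ : Fin N → ℝ) (hw : ∀ k, Am *ᵥ ⇑(w k) = μ k • ⇑(w k))
    (x : EuclideanSpace ℝ ι) :
    (x : ι → ℝ) ⬝ᵥ (Am *ᵥ (x : ι → ℝ)) = ∑ k, μ k * (w.repr x k) ^ 2 := by
  have hx : (x : ι → ℝ) = ∑ k, w.repr x k • ((w k : EuclideanSpace ℝ ι) : ι → ℝ) := by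
    have h := w.sum_repr x
    funext j
    have h2 := congrArg (fun v : EuclideanSpace ℝ ι => v j) h
    simp only [Finset.sum_apply, PiLp.smul_apply, smul_eq_mul] at h2 ⊢
    rw [← h2]
    simp
  have hdotw : ∀ k, (x : ι → ℝ) ⬝ᵥ ((w k : EuclideanSpace ℝ ι) : ι → ℝ) = w.repr x k := by
    intro k
    rw [← dot_eq_inner, real_inner_comm, ← w.repr_apply_apply]
  have hw' : ∀ k, Am *ᵥ (w k) = μ k • (w k) := fun k => hw k
  have hAx : Am *ᵥ (x : ι → ℝ) = ∑ k, (w.repr x k * μ k) • ((w k : EuclideanSpace ℝ ι) : ι → ℝ) := by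
    conv_lhs => rw [hx, ← Matrix.mulVecLin_apply]
    rw [map_sum]
    refine Finset.sum_congr rfl fun k _ => ?_
    rw [_root_.map_smul, Matrix.mulVecLin_apply, hw' k, smul_smul]
  rw [hAx, dot_sum]
  refine Finset.sum_congr rfl fun k _ => ?_
  rw [dotProduct_smul, hdotw k]
  ring_nf

lemma normsq_eq_sum {ι : Type*} [Fintype ι] [DecidableEq ι] {N : ℕ}
    (w : OrthonormalBasis (Fin N) ℝ (EuclideanSpace ℝ ι))
    (x : EuclideanSpace ℝ ι) :
    (x : ι → ℝ) ⬝ᵥ (x : ι → ℝ) = ∑ k, (w.repr x k) ^ 2 := by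
  have h := quad_eq_sum (1 : Matrix ι ι ℝ) w (fun _ => 1)
    (fun k => by rw [Matrix.one_mulVec, one_smul]) x
  rw [Matrix.one_mulVec] at h
  simpa using h

lemma repr_vanish {ι : Type*} [Fintype ι] {N : ℕ}
    (w : OrthonormalBasis (Fin N) ℝ (EuclideanSpace ℝ ι))
    (S : Set (Fin N)) (x : EuclideanSpace ℝ ι)
    (hx : x ∈ Submodule.span ℝ (⇑w '' S)) (k : Fin N) (hk : k ∉ S) :
    w.repr x k = 0 := by
  rw [w.repr_apply_apply]
  induction hx using Submodule.span_induction with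
  | mem y hy =>
    obtain ⟨j, hj, rfl⟩ := hy
    exact w.orthonormal.2 (fun h : k = j => hk (h ▸ hj))
  | zero => exact inner_zero_right _
  | add y z _ _ hy hz => rw [inner_add_right, hy, hz, add_zero]
  | smul c y _ hy => rw [inner_smul_right, hy, mul_zero]

lemma finrank_span_orthonormal {E : Type*} [NormedAddCommGroup E] [InnerProductSpace ℝ E]
    {κ : Type*} {v : κ → E} (hv : Orthonormal ℝ v) (S : Finset κ) :
    Module.finrank ℝ (Submodule.span ℝ (v '' ↑S)) = S.card := by
  have hli : LinearIndependent ℝ (fun s : {x // x ∈ S} => v s) :=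
    (hv.comp _ Subtype.val_injective).linearIndependent
  rw [Set.image_eq_range]
  exact (finrank_span_eq_card hli).trans (Fintype.card_coe S)

lemma weyl_le {ι : Type*} [Fintype ι] [DecidableEq ι] {Am Bm : Matrix ι ι ℝ}
    (hA : Am.IsHermitian) (hB : Bm.IsHermitian) (b : ℝ)
    (hq : ∀ y : ι → ℝ, y ⬝ᵥ (Bm *ᵥ y) ≤ y ⬝ᵥ (Am *ᵥ y) + b * (y ⬝ᵥ y))
    (i : ℕ) (hi : i < Fintype.card ι) :
    ithEig hB i hi ≤ ithEig hA i hi + b := by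
  classical
  obtain ⟨gA, hmA, hiA⟩ := exists_sorted_enum hA
  obtain ⟨gB, hmB, hiB⟩ := exists_sorted_enum hB
  set i0 : Fin (Fintype.card ι) := ⟨i, hi⟩ with hi0def
  set wA : OrthonormalBasis (Fin (Fintype.card ι)) ℝ (EuclideanSpace ℝ ι) := hA.eigenvectorBasis.reindex gA.symm
    with hwAdef
  set wB : OrthonormalBasis (Fin (Fintype.card ι)) ℝ (EuclideanSpace ℝ ι) := hB.eigenvectorBasis.reindex gB.symm
    with hwBdef
  have hwA : ∀ k, Am *ᵥ ⇑(wA k) = hA.eigenvalues (gA k) • ⇑(wA k) := by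
    intro k
    have h := hA.mulVec_eigenvectorBasis (gA k)
    rw [hwAdef, OrthonormalBasis.reindex_apply, Equiv.symm_symm]
    exact h
  have hwB : ∀ k, Bm *ᵥ ⇑(wB k) = hB.eigenvalues (gB k) • ⇑(wB k) := by
    intro k
    have h := hB.mulVec_eigenvectorBasis (gB k)
    rw [hwBdef, OrthonormalBasis.reindex_apply, Equiv.symm_symm]
    exact h
  have hdimV := finrank_span_orthonormal wA.orthonormal (Finset.Iic i0)
  rw [Fin.card_Iic] at hdimV
  have hdimW := finrank_span_orthonormal wB.orthonormal (Finset.Ici i0)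
  rw [Fin.card_Ici] at hdimW
  set V := Submodule.span ℝ (⇑wA '' ↑(Finset.Iic i0)) with hV
  set W := Submodule.span ℝ (⇑wB '' ↑(Finset.Ici i0)) with hW
  have hVW : V ⊓ W ≠ ⊥ := by
    intro hbot
    have h1 := Submodule.finrank_sup_add_finrank_inf_eq V W
    rw [hbot, finrank_bot] at h1
    have h2 : Module.finrank ℝ ↥(V ⊔ W) ≤ Fintype.card ι :=
      le_trans (Submodule.finrank_le _) (le_of_eq finrank_euclideanSpace)
    have hiN : (i0 : ℕ) < Fintype.card ι := i0.2
    omega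
  obtain ⟨x, hxmem, hx0⟩ := (Submodule.ne_bot_iff _).mp hVW
  obtain ⟨hxV, hxW⟩ := Submodule.mem_inf.mp hxmem
  have hcA : ∀ k, k ∉ Finset.Iic i0 → wA.repr x k = 0 := fun k hk =>
    repr_vanish wA _ x hxV k (by simpa using hk)
  have hcB : ∀ k, k ∉ Finset.Ici i0 → wB.repr x k = 0 := fun k hk =>
    repr_vanish wB _ x hxW k (by simpa using hk)
  have hS : (0:ℝ) < ∑ k, (wA.repr x k)^2 := by
    have hne : ∃ k, wA.repr x k ≠ 0 := by
      by_contra h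
      push_neg at h
      apply hx0
      have hz : wA.repr x = 0 := by
        ext k
        simpa using h k
      exact wA.repr.map_eq_zero_iff.mp hz
    obtain ⟨k0, hk0⟩ := hne
    exact Finset.sum_pos' (fun k _ => sq_nonneg _) ⟨k0, Finset.mem_univ _, by positivity⟩
  have hSS : ∑ k, (wB.repr x k)^2 = ∑ k, (wA.repr x k)^2 := by
    rw [← normsq_eq_sum wB x, ← normsq_eq_sum wA x]
  have hqA : (x : ι → ℝ) ⬝ᵥ (Am *ᵥ (x : ι → ℝ))
      ≤ hA.eigenvalues (gA i0) * ∑ k, (wA.repr x k)^2 := by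
    rw [quad_eq_sum Am wA (fun k => hA.eigenvalues (gA k)) hwA x, Finset.mul_sum]
    refine Finset.sum_le_sum fun k _ => ?_
    by_cases h : k ∈ Finset.Iic i0
    · exact mul_le_mul_of_nonneg_right (show hA.eigenvalues (gA k) ≤ hA.eigenvalues (gA i0) from hmA (Finset.mem_Iic.mp h)) (sq_nonneg _)
    · rw [hcA k h]
      simp
  have hqB : hB.eigenvalues (gB i0) * ∑ k, (wA.repr x k)^2
      ≤ (x : ι → ℝ) ⬝ᵥ (Bm *ᵥ (x : ι → ℝ)) := by
    rw [quad_eq_sum Bm wB (fun k => hB.eigenvalues (gB k)) hwB x, ← hSS, Finset.mul_sum]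
    refine Finset.sum_le_sum fun k _ => ?_
    by_cases h : k ∈ Finset.Ici i0
    · exact mul_le_mul_of_nonneg_right (show hB.eigenvalues (gB i0) ≤ hB.eigenvalues (gB k) from hmB (Finset.mem_Ici.mp h)) (sq_nonneg _)
    · rw [hcB k h]
      simp
  have hxx : (x : ι → ℝ) ⬝ᵥ (x : ι → ℝ) = ∑ k, (wA.repr x k)^2 := normsq_eq_sum wA x
  have hmain := hq (x : ι → ℝ)
  rw [hxx] at hmain
  have hkey : hB.eigenvalues (gB i0) * ∑ k, (wA.repr x k)^2
      ≤ (hA.eigenvalues (gA i0) + b) * ∑ k, (wA.repr x k)^2 := by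
    rw [add_mul]
    linarith
  have hfin : hB.eigenvalues (gB i0) ≤ hA.eigenvalues (gA i0) + b :=
    le_of_mul_le_mul_right hkey hS
  calc ithEig hB i hi = hB.eigenvalues (gB i0) := hiB i0
    _ ≤ hA.eigenvalues (gA i0) + b := hfin
    _ = ithEig hA i hi + b := by rw [hiA i0]

lemma enorm_nonneg' {ι : Type*} [Fintype ι] (x : ι → ℝ) : 0 ≤ euclidNorm x := Real.sqrt_nonneg _

lemma enorm_sq' {ι : Type*} [Fintype ι] (x : ι → ℝ) : euclidNorm x ^ 2 = ∑ i, x i ^ 2 :=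
  Real.sq_sqrt (Finset.sum_nonneg fun _ _ => sq_nonneg _)

lemma enorm_smul' {ι : Type*} [Fintype ι] (c : ℝ) (x : ι → ℝ) :
    euclidNorm (c • x) = |c| * euclidNorm x := by
  unfold euclidNorm
  rw [show ∑ i, (c • x) i ^ 2 = c ^ 2 * ∑ i, x i ^ 2 by
    rw [Finset.mul_sum]; exact Finset.sum_congr rfl fun i _ => by simp [mul_pow],
    Real.sqrt_mul (sq_nonneg c), Real.sqrt_sq_eq_abs]

lemma mulVec_enorm_le {m n : ℕ} (A : Matrix (Fin m) (Fin n) ℝ) (y : Fin n → ℝ) :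
    euclidNorm (A *ᵥ y) ≤ specNorm A * euclidNorm y := by
  classical
  set z := A *ᵥ y with hz
  set L := ⨆ j, (Matrix.isHermitian_mul_conjTranspose_self A).eigenvalues j with hL
  by_cases hz0 : ∑ j, z j ^ 2 = 0
  · have h0 : euclidNorm z = 0 := by rw [euclidNorm, hz0, Real.sqrt_zero]
    rw [h0]
    exact mul_nonneg (Real.sqrt_nonneg _) (Real.sqrt_nonneg _)
  · have hzpos : 0 < ∑ j, z j ^ 2 :=
      lt_of_le_of_ne (Finset.sum_nonneg fun _ _ => sq_nonneg _) (Ne.symm hz0)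
    have hm : Nonempty (Fin m) := by
      by_contra h
      rw [not_nonempty_iff] at h
      exact hz0 (by simp)
    have hH := Matrix.isHermitian_mul_conjTranspose_self A
    have hLnn : 0 ≤ L :=
      le_trans (Matrix.eigenvalues_self_mul_conjTranspose_nonneg A (Classical.arbitrary _))
        (le_ciSup (Set.Finite.bddAbove (Set.finite_range _)) _)
    have hquad : ∀ v : Fin m → ℝ, v ⬝ᵥ ((A * Aᴴ) *ᵥ v) ≤ L * ∑ j, v j ^ 2 := by
      intro v
      obtain ⟨v, rfl⟩ : ∃ v' : EuclideanSpace ℝ (Fin m), (v' : Fin m → ℝ) = v := ⟨WithLp.toLp 2 v, rfl⟩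
      rw [quad_eq_sum (A * Aᴴ) hH.eigenvectorBasis hH.eigenvalues hH.mulVec_eigenvectorBasis v]
      have hvv : ∑ j, v j ^ 2 = v ⬝ᵥ v := by simp [dotProduct, sq]
      calc ∑ k, hH.eigenvalues k * (hH.eigenvectorBasis.repr v k) ^ 2
          ≤ ∑ k, L * (hH.eigenvectorBasis.repr v k) ^ 2 :=
            Finset.sum_le_sum fun k _ => mul_le_mul_of_nonneg_right
              (le_ciSup (Set.Finite.bddAbove (Set.finite_range _)) k) (sq_nonneg _)
        _ = L * ∑ k, (hH.eigenvectorBasis.repr v k) ^ 2 := (Finset.mul_sum _ _ _).symm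
        _ = L * ∑ j, v j ^ 2 := by rw [hvv, normsq_eq_sum hH.eigenvectorBasis v]
    have hCS : (∑ j, z j ^ 2) ^ 2 ≤ (∑ j, (Aᵀ *ᵥ z) j ^ 2) * (∑ i, y i ^ 2) := by
      have h1 : ∑ j, z j ^ 2 = (Aᵀ *ᵥ z) ⬝ᵥ y := by
        calc ∑ j, z j ^ 2 = z ⬝ᵥ z := by simp [dotProduct, sq]
          _ = z ⬝ᵥ (A *ᵥ y) := by rw [← hz]
          _ = (z ᵥ* A) ⬝ᵥ y := Matrix.dotProduct_mulVec z A y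
          _ = (Aᵀ *ᵥ z) ⬝ᵥ y := by rw [Matrix.mulVec_transpose]
      rw [h1]
      have h2 := Finset.sum_mul_sq_le_sq_mul_sq Finset.univ (fun j => (Aᵀ *ᵥ z) j) y
      simpa [dotProduct] using h2
    have hAZ : ∑ j, (Aᵀ *ᵥ z) j ^ 2 ≤ L * ∑ j, z j ^ 2 := by
      have hAH : Aᴴ = Aᵀ := Matrix.conjTranspose_eq_transpose_of_trivial A
      have h2 : z ⬝ᵥ ((A * Aᴴ) *ᵥ z) = ∑ j, (Aᵀ *ᵥ z) j ^ 2 := by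
        rw [hAH]
        conv_lhs => rw [← Matrix.mulVec_mulVec]
        rw [Matrix.dotProduct_mulVec, ← Matrix.mulVec_transpose]
        simp [dotProduct, sq]
      rw [← h2]
      exact hquad z
    have hyn : (0:ℝ) ≤ ∑ i, y i ^ 2 := Finset.sum_nonneg fun _ _ => sq_nonneg _
    have h3 : (∑ j, z j ^ 2) ^ 2 ≤ (L * ∑ j, z j ^ 2) * (∑ i, y i ^ 2) :=
      le_trans hCS (mul_le_mul_of_nonneg_right hAZ hyn)
    have h4 : (∑ j, z j ^ 2) * (∑ j, z j ^ 2) ≤ (L * ∑ i, y i ^ 2) * (∑ j, z j ^ 2) := by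
      nlinarith [h3]
    have hkey : (∑ j, z j ^ 2) ≤ L * ∑ i, y i ^ 2 := le_of_mul_le_mul_right h4 hzpos
    rw [euclidNorm, euclidNorm, specNorm, ← hL]
    calc Real.sqrt (∑ j, z j ^ 2) ≤ Real.sqrt (L * ∑ i, y i ^ 2) := Real.sqrt_le_sqrt hkey
      _ = Real.sqrt L * Real.sqrt (∑ i, y i ^ 2) := Real.sqrt_mul hLnn _

/-- With `M = [[−Θ⁻¹, Aᵀ],[A, 0]]`, `E = [[0,0],[0, δ I]]`, `δ > 0`, if the i-th smallest
eigenvalue `λᵢ` of `M` satisfies `|λᵢ| > 2δ`, then for any `t ∈ [0,1]` and any unit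
eigenvector `x(t) = (x₁(t), x₂(t))` of `M + tE` for its i-th smallest eigenvalue,
`‖x₂(t)‖ ≤ ‖A‖ / √((|λᵢ| − 2δ)² + ‖A‖²)`. -/
theorem stmt_1 {m n : ℕ} (A : Matrix (Fin m) (Fin n) ℝ)
    (d : Fin n → ℝ) (hd : ∀ j, 0 < d j)
    (δ : ℝ) (hδ : 0 < δ)
    (M E : Matrix (Fin n ⊕ Fin m) (Fin n ⊕ Fin m) ℝ)
    (hMdef : M = Matrix.fromBlocks (-(Matrix.diagonal d)⁻¹) Aᵀ A 0)
    (hEdef : E = Matrix.fromBlocks 0 0 0 (δ • (1 : Matrix (Fin m) (Fin m) ℝ)))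
    (hM : M.IsHermitian)
    (hHerm : ∀ t : ℝ, (M + t • E).IsHermitian)
    (i : ℕ) (hi : i < Fintype.card (Fin n ⊕ Fin m))
    (hbig : 2 * δ < |ithEig hM i hi|)
    (t : ℝ) (ht : t ∈ Set.Icc (0 : ℝ) 1)
    (x : Fin n ⊕ Fin m → ℝ) (hx : x ≠ 0)
    (heig : (M + t • E).mulVec x = ithEig (hHerm t) i hi • x)
    (hxnorm : euclidNorm x = 1) :
    euclidNorm (x ∘ Sum.inr) ≤
      specNorm A / Real.sqrt ((|ithEig hM i hi| - 2 * δ) ^ 2 + specNorm A ^ 2) := by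
  obtain ⟨ht0, ht1⟩ := ht
  have hEv : ∀ y : Fin n ⊕ Fin m → ℝ, (t • E) *ᵥ y
      = Sum.elim (fun _ : Fin n => (0:ℝ)) (fun j => t * δ * y (Sum.inr j)) := by
    intro y
    rw [hEdef, Matrix.smul_mulVec, Matrix.fromBlocks_mulVec]
    funext p
    cases p with
    | inl a => simp
    | inr j =>
      simp [Matrix.smul_mulVec, Matrix.one_mulVec]
      ring
  have hEquad : ∀ y : Fin n ⊕ Fin m → ℝ,
      y ⬝ᵥ ((t • E) *ᵥ y) = t * δ * ∑ j, y (Sum.inr j) ^ 2 := by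
    intro y
    rw [hEv y]
    rw [show dotProduct y (Sum.elim (fun _ : Fin n => (0:ℝ))
        (fun j => t * δ * y (Sum.inr j)))
      = ∑ a : Fin n, y (Sum.inl a) * 0
        + ∑ j : Fin m, y (Sum.inr j) * (t * δ * y (Sum.inr j)) from
      Fintype.sum_sum_type _]
    rw [Finset.mul_sum]
    simp only [mul_zero, Finset.sum_const_zero, zero_add]
    exact Finset.sum_congr rfl fun j _ => by ring
  have hsq : ∀ y : Fin n ⊕ Fin m → ℝ, y ⬝ᵥ y = ∑ p, y p ^ 2 := by
    intro y
    simp [dotProduct, sq]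
  have hinr_le : ∀ y : Fin n ⊕ Fin m → ℝ, ∑ j, y (Sum.inr j) ^ 2 ≤ ∑ p, y p ^ 2 := by
    intro y
    rw [Fintype.sum_sum_type]
    have h0 : (0:ℝ) ≤ ∑ a, y (Sum.inl a) ^ 2 := Finset.sum_nonneg fun _ _ => sq_nonneg _
    linarith
  set lam0 := ithEig hM i hi with hlam0
  set lamt := ithEig (hHerm t) i hi with hlamt
  have hup : lamt ≤ lam0 + δ := by
    refine weyl_le hM (hHerm t) δ (fun y => ?_) i hi
    rw [Matrix.add_mulVec, dotProduct_add, hEquad y, hsq y]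
    have h3 : (0:ℝ) ≤ ∑ j, y (Sum.inr j) ^ 2 := Finset.sum_nonneg fun _ _ => sq_nonneg _
    have h2 := hinr_le y
    nlinarith [mul_nonneg (mul_nonneg (sub_nonneg.mpr ht1) hδ.le) h3,
      mul_nonneg hδ.le (sub_nonneg.mpr h2)]
  have hdown : lam0 ≤ lamt := by
    have h := weyl_le (hHerm t) hM 0 (fun y => ?_) i hi
    · linarith
    · rw [Matrix.add_mulVec, dotProduct_add, hEquad y]
      have h3 : (0:ℝ) ≤ t * δ * ∑ j, y (Sum.inr j) ^ 2 := by
        have := Finset.sum_nonneg (s := Finset.univ) fun j _ => sq_nonneg (y (Sum.inr j))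
        positivity
      linarith
  set x1 : Fin n → ℝ := x ∘ Sum.inl with hx1
  set x2 : Fin m → ℝ := x ∘ Sum.inr with hx2
  have hrow : A *ᵥ x1 = (lamt - t * δ) • x2 := by
    funext j
    have h := congrFun heig (Sum.inr j)
    rw [Matrix.mulVec, ← Matrix.mulVec] at h
    rw [Matrix.add_mulVec] at h
    have hM2 : (M *ᵥ x) (Sum.inr j) = (A *ᵥ x1) j := by
      rw [hMdef, Matrix.fromBlocks_mulVec]
      simp [hx1]
    have hE2 : ((t • E) *ᵥ x) (Sum.inr j) = t * δ * x2 j := by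
      rw [hEv x]
      simp [hx2]
    have hcomb : (A *ᵥ x1) j + t * δ * x2 j = lamt * x2 j := by
      have h' : (M *ᵥ x) (Sum.inr j) + ((t • E) *ᵥ x) (Sum.inr j) = lamt * x (Sum.inr j) := h
      rw [hM2, hE2] at h'
      exact h'
    have : ((lamt - t * δ) • x2) j = (lamt - t * δ) * x2 j := rfl
    rw [this]
    linarith
  have hu1 : euclidNorm x1 ^ 2 = ∑ j, x1 j ^ 2 := enorm_sq' x1
  have hu2 : euclidNorm x2 ^ 2 = ∑ j, x2 j ^ 2 := enorm_sq' x2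
  have hsum1 : euclidNorm x1 ^ 2 + euclidNorm x2 ^ 2 = 1 := by
    have hs : Real.sqrt (∑ p, x p ^ 2) = 1 := hxnorm
    have hsum : ∑ p, x p ^ 2 = 1 := Real.sqrt_eq_one.mp hs
    rw [hu1, hu2]
    rw [← hsum, Fintype.sum_sum_type]
    rfl
  have hAx : |lamt - t * δ| * euclidNorm x2 ≤ specNorm A * euclidNorm x1 := by
    have h := mulVec_enorm_le A x1
    rw [hrow, enorm_smul'] at h
    exact h
  have habs : |lam0| - 2 * δ ≤ |lamt - t * δ| := by
    rcases le_total 0 lam0 with h | h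
    · have h1 : lam0 - 2 * δ ≤ lamt - t * δ := by nlinarith
      calc |lam0| - 2 * δ = lam0 - 2 * δ := by rw [abs_of_nonneg h]
        _ ≤ lamt - t * δ := h1
        _ ≤ |lamt - t * δ| := le_abs_self _
    · have h1 : -lam0 - 2 * δ ≤ -(lamt - t * δ) := by nlinarith
      calc |lam0| - 2 * δ = -lam0 - 2 * δ := by rw [abs_of_nonpos h]
        _ ≤ -(lamt - t * δ) := h1
        _ ≤ |lamt - t * δ| := neg_le_abs _
  have hcpos : 0 < |lam0| - 2 * δ := by linarith
  have hsnn : 0 ≤ specNorm A := Real.sqrt_nonneg _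
  have hu2nn : 0 ≤ euclidNorm x2 := enorm_nonneg' x2
  have hu1nn : 0 ≤ euclidNorm x1 := enorm_nonneg' x1
  have hcu : (|lam0| - 2 * δ) * euclidNorm x2 ≤ specNorm A * euclidNorm x1 :=
    le_trans (mul_le_mul_of_nonneg_right habs hu2nn) hAx
  have hdenpos : 0 < Real.sqrt ((|lam0| - 2 * δ) ^ 2 + specNorm A ^ 2) :=
    Real.sqrt_pos.mpr (by positivity)
  rw [le_div_iff₀ hdenpos]
  have hsq2 : (euclidNorm x2 * Real.sqrt ((|lam0| - 2 * δ) ^ 2 + specNorm A ^ 2)) ^ 2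
      ≤ specNorm A ^ 2 := by
    rw [mul_pow, Real.sq_sqrt (by positivity)]
    have hsq1 : ((|lam0| - 2 * δ) * euclidNorm x2) ^ 2 ≤ (specNorm A * euclidNorm x1) ^ 2 :=
      pow_le_pow_left₀ (mul_nonneg hcpos.le hu2nn) hcu 2
    nlinarith [hsq1, hsum1]
  have hnn : 0 ≤ euclidNorm x2 * Real.sqrt ((|lam0| - 2 * δ) ^ 2 + specNorm A ^ 2) :=
    mul_nonneg hu2nn hdenpos.le
  calc euclidNorm x2 * Real.sqrt ((|lam0| - 2 * δ) ^ 2 + specNorm A ^ 2)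
      = Real.sqrt ((euclidNorm x2 * Real.sqrt ((|lam0| - 2 * δ) ^ 2 + specNorm A ^ 2)) ^ 2) :=
        (Real.sqrt_sq hnn).symm
    _ ≤ Real.sqrt (specNorm A ^ 2) := Real.sqrt_le_sqrt hsq2
    _ = specNorm A := Real.sqrt_sq hsnn
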